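/- Let $(X,\sigma)$ be a zero-dimensional Polish space, $(H_n)_{n\in\omega}$ a pairwise disjoint family of subsets of $X$, and $(\sigma_n)_{n\in\omega}$ a sequence of topologies with $\sigma_0 = \sigma$, $H_0$ closed in $\sigma_0$, and inductively $\sigma_{n+1} = \langle \sigma_n \cup \{H_n\}\rangle$ with $H_{n+1}$ closed in $\sigma_{n+1}$. Let $\sigma_\infty = \langle \bigcup_n \sigma_n\rangle$. Then: (a) $\sigma_\infty$ is zero-dimensional Polish; (b) $\sigma_\infty$ restricted to $X \setminus \bigcup_n H_n$ equals $\sigma$ restricted to that set; (c) for every $n$, $\sigma_\infty$ restricted to $H_n$ equals $\sigma$ restricted to $H_n$; (d) every $H_n$ is $\sigma_\infty$-clopen. -/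

import Mathlib

open TopologicalSpace Set Topology

section Aux

variable {X : Type*}

/-- The refined topology is finer than the original one. -/
lemma genFrom_le (t : TopologicalSpace X) (s : Set X) :
    generateFrom ({u | IsOpen[t] u} ∪ {s}) ≤ t := by
  conv_rhs => rw [← t.generateFrom_setOf_isOpen]
  exact generateFrom_anti subset_union_left

lemma isOpen_genFrom_iff {t : TopologicalSpace X} {s : Set X} (hs : IsClosed[t] s) {W : Set X} :
    IsOpen[generateFrom ({u | IsOpen[t] u} ∪ {s})] W ↔
      ∃ u v, IsOpen[t] u ∧ IsOpen[t] v ∧ W = (u ∩ s) ∪ (v ∩ sᶜ) := by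
  constructor
  · intro h
    induction h with
    | basic w hw =>
        rcases hw with hw | hw
        · exact ⟨w, w, hw, hw, by ext x; by_cases hx : x ∈ s <;> simp [hx]⟩
        · refine ⟨univ, ∅, isOpen_univ, isOpen_empty, ?_⟩
          simp only [Set.mem_singleton_iff] at hw
          simp [hw]
    | univ =>
        exact ⟨univ, univ, isOpen_univ, isOpen_univ,
          by ext x; by_cases hx : x ∈ s <;> simp [hx]⟩
    | inter w₁ w₂ _ _ ih₁ ih₂ =>
        obtain ⟨u₁, v₁, hu₁, hv₁, rfl⟩ := ih₁
        obtain ⟨u₂, v₂, hu₂, hv₂, rfl⟩ := ih₂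
        refine ⟨u₁ ∩ u₂, v₁ ∩ v₂, hu₁.inter hu₂, hv₁.inter hv₂, ?_⟩
        ext x; by_cases hx : x ∈ s <;> simp [hx] <;> tauto
    | sUnion S _ ih =>
        choose u v hu hv hw using ih
        refine ⟨⋃ w : S, u w w.2, ⋃ w : S, v w w.2,
          isOpen_iUnion fun w => hu w w.2, isOpen_iUnion fun w => hv w w.2, ?_⟩
        ext x
        simp only [Set.mem_sUnion, Set.mem_union, Set.mem_inter_iff, Set.mem_iUnion,
          Set.mem_compl_iff, Subtype.exists]
        constructor
        · rintro ⟨w, hwS, hxw⟩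
          rw [hw w hwS] at hxw
          rcases hxw with ⟨hxu, hxs⟩ | ⟨hxv, hxs⟩
          · exact Or.inl ⟨⟨w, hwS, hxu⟩, hxs⟩
          · exact Or.inr ⟨⟨w, hwS, hxv⟩, hxs⟩
        · rintro (⟨⟨w, hwS, hxu⟩, hxs⟩ | ⟨⟨w, hwS, hxv⟩, hxs⟩)
          · exact ⟨w, hwS, by rw [hw w hwS]; exact Or.inl ⟨hxu, hxs⟩⟩
          · exact ⟨w, hwS, by rw [hw w hwS]; exact Or.inr ⟨hxv, hxs⟩⟩
  · rintro ⟨u, v, hu, hv, rfl⟩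
    have h1 : IsOpen[generateFrom ({u | IsOpen[t] u} ∪ {s})] u :=
      GenerateOpen.basic _ (Or.inl hu)
    have h2 : IsOpen[generateFrom ({u | IsOpen[t] u} ∪ {s})] s :=
      GenerateOpen.basic _ (Or.inr rfl)
    have h3 : IsOpen[generateFrom ({u | IsOpen[t] u} ∪ {s})] (v ∩ sᶜ) :=
      GenerateOpen.basic _ (Or.inl (hv.inter hs.isOpen_compl))
    exact @IsOpen.union X _ _ (generateFrom ({u | IsOpen[t] u} ∪ {s}))
      (@IsOpen.inter X (generateFrom ({u | IsOpen[t] u} ∪ {s})) _ _ h1 h2) h3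

/-- Refining a Polish topology by a closed set keeps it Polish. -/
lemma polish_genFrom [t : TopologicalSpace X] [PolishSpace X] {s : Set X}
    (hs : IsClosed s) :
    @PolishSpace X (generateFrom ({u | IsOpen u} ∪ {s})) := by
  classical
  haveI : PolishSpace s := hs.polishSpace
  haveI : PolishSpace ↥sᶜ := hs.isOpen_compl.polishSpace
  let f : ↥s ⊕ ↥sᶜ ≃ X := Equiv.Set.sumCompl s
  have key : generateFrom ({u | IsOpen u} ∪ {s}) =
      TopologicalSpace.coinduced f instTopologicalSpaceSum := by
    apply le_antisymm
    · intro W hW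
      rw [isOpen_coinduced, isOpen_sum_iff] at hW
      obtain ⟨h1, h2⟩ := hW
      have e1 : (fun x : s => f (Sum.inl x)) = (Subtype.val : s → X) := by
        funext x; exact Equiv.Set.sumCompl_apply_inl ..
      have e2 : (fun x : ↥sᶜ => f (Sum.inr x)) = (Subtype.val : ↥sᶜ → X) := by
        funext x; exact Equiv.Set.sumCompl_apply_inr ..
      rw [show (Sum.inl ⁻¹' (f ⁻¹' W)) = (Subtype.val : s → X) ⁻¹' W by
        rw [← e1]; rfl] at h1
      rw [show (Sum.inr ⁻¹' (f ⁻¹' W)) = (Subtype.val : ↥sᶜ → X) ⁻¹' W by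
        rw [← e2]; rfl] at h2
      rw [isOpen_induced_iff] at h1 h2
      obtain ⟨u, hu, hu'⟩ := h1
      obtain ⟨v, hv, hv'⟩ := h2
      rw [isOpen_genFrom_iff hs]
      refine ⟨u, v, hu, hv, ?_⟩
      have hus : u ∩ s = W ∩ s := by
        ext x
        constructor
        · rintro ⟨hxu, hxs⟩; exact ⟨(Set.ext_iff.mp hu' ⟨x, hxs⟩).mp hxu, hxs⟩
        · rintro ⟨hxW, hxs⟩; exact ⟨(Set.ext_iff.mp hu' ⟨x, hxs⟩).mpr hxW, hxs⟩
      have hvs : v ∩ sᶜ = W ∩ sᶜ := by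
        ext x
        constructor
        · rintro ⟨hxv, hxs⟩; exact ⟨(Set.ext_iff.mp hv' ⟨x, hxs⟩).mp hxv, hxs⟩
        · rintro ⟨hxW, hxs⟩; exact ⟨(Set.ext_iff.mp hv' ⟨x, hxs⟩).mpr hxW, hxs⟩
      rw [hus, hvs]
      ext x; by_cases hx : x ∈ s <;> simp [hx]
    · apply le_generateFrom
      rintro w (hw | hw)
      · -- w is open in t, hence coinduced-open
        rw [isOpen_coinduced, isOpen_sum_iff]
        constructor
        · have e1 : (fun x : s => f (Sum.inl x)) = (Subtype.val : s → X) := by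
            funext x; exact Equiv.Set.sumCompl_apply_inl ..
          rw [show (Sum.inl ⁻¹' (f ⁻¹' w)) = (Subtype.val : s → X) ⁻¹' w by
            rw [← e1]; rfl]
          exact (continuous_subtype_val).isOpen_preimage w hw
        · have e2 : (fun x : ↥sᶜ => f (Sum.inr x)) = (Subtype.val : ↥sᶜ → X) := by
            funext x; exact Equiv.Set.sumCompl_apply_inr ..
          rw [show (Sum.inr ⁻¹' (f ⁻¹' w)) = (Subtype.val : ↥sᶜ → X) ⁻¹' w by
            rw [← e2]; rfl]
          exact (continuous_subtype_val).isOpen_preimage w hw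
      · simp only [Set.mem_singleton_iff] at hw
        rw [hw]
        rw [isOpen_coinduced, isOpen_sum_iff]
        constructor
        · have e1 : (fun x : s => f (Sum.inl x)) = (Subtype.val : s → X) := by
            funext x; exact Equiv.Set.sumCompl_apply_inl ..
          rw [show (Sum.inl ⁻¹' (f ⁻¹' s)) = (Subtype.val : s → X) ⁻¹' s by
            rw [← e1]; rfl, Subtype.coe_preimage_self]
          exact isOpen_univ
        · have e2 : (fun x : ↥sᶜ => f (Sum.inr x)) = (Subtype.val : ↥sᶜ → X) := by
            funext x; exact Equiv.Set.sumCompl_apply_inr ..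
          rw [show (Sum.inr ⁻¹' (f ⁻¹' s)) = (Subtype.val : ↥sᶜ → X) ⁻¹' s by
            rw [← e2]; rfl]
          have : (Subtype.val : ↥sᶜ → X) ⁻¹' s = ∅ := by
            ext x; simpa using fun h => x.2 h
          rw [this]; exact isOpen_empty
  rw [key, ← f.induced_symm]
  exact f.symm.polishSpace_induced

/-- Refining a zero-dimensional topology by a closed set keeps it zero-dimensional. -/
lemma zdim_genFrom [t : TopologicalSpace X]
    (ht : IsTopologicalBasis {c : Set X | IsClopen c}) {s : Set X} (hs : IsClosed s) :
    @IsTopologicalBasis X (generateFrom ({u | IsOpen u} ∪ {s}))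
      {c | @IsClopen X (generateFrom ({u | IsOpen u} ∪ {s})) c} := by
  set t' := generateFrom ({u : Set X | IsOpen u} ∪ {s}) with ht'
  have hle : t' ≤ t := genFrom_le t s
  have hsopen : IsOpen[t'] s := GenerateOpen.basic _ (Or.inr rfl)
  have hopen : ∀ {u : Set X}, IsOpen[t] u → IsOpen[t'] u := fun hu => hle _ hu
  have hclosed : ∀ {u : Set X}, IsClosed[t] u → IsClosed[t'] u := fun hu =>
    ⟨hle _ hu.isOpen_compl⟩
  refine @isTopologicalBasis_of_isOpen_of_nhds X t' _ (fun c hc => hc.2) ?_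
  intro a W ha hW
  rw [ht'] at hW
  rw [isOpen_genFrom_iff hs] at hW
  obtain ⟨u, v, hu, hv, rfl⟩ := hW
  by_cases hx : a ∈ s
  · have hau : a ∈ u := by
      rcases ha with h | h
      · exact h.1
      · exact absurd hx h.2
    obtain ⟨c, hc, hac, hcu⟩ :=
      @TopologicalSpace.IsTopologicalBasis.exists_subset_of_mem_open X t _ ht a u hau hu
    refine ⟨c ∩ s, ⟨@IsClosed.inter X _ _ t' (hclosed hc.1) (hclosed hs),
      @IsOpen.inter X t' _ _ (hopen hc.2) hsopen⟩, ⟨hac, hx⟩, ?_⟩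
    exact fun y hy => Or.inl ⟨hcu hy.1, hy.2⟩
  · have hav : a ∈ v := by
      rcases ha with h | h
      · exact absurd h.2 hx
      · exact h.1
    obtain ⟨c, hc, hac, hcv⟩ :=
      @TopologicalSpace.IsTopologicalBasis.exists_subset_of_mem_open X t _ ht a v hav hv
    refine ⟨c ∩ sᶜ, ⟨@IsClosed.inter X _ _ t' (hclosed hc.1)
      (@IsOpen.isClosed_compl X t' _ hsopen),
      @IsOpen.inter X t' _ _ (hopen hc.2) (hopen hs.isOpen_compl)⟩, ⟨hac, hx⟩, ?_⟩
    exact fun y hy => Or.inr ⟨hcv hy.1, hy.2⟩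

/-- The refinement does not change the subspace topology on subsets of `s` or disjoint from `s`. -/
lemma induced_genFrom (t : TopologicalSpace X) (s S : Set X)
    (h : S ⊆ s ∨ Disjoint S s) :
    TopologicalSpace.induced (Subtype.val : S → X) (generateFrom ({u | IsOpen[t] u} ∪ {s})) =
      TopologicalSpace.induced (Subtype.val : S → X) t := by
  rw [induced_generateFrom_eq]
  apply le_antisymm
  · intro W hW
    rw [isOpen_induced_iff] at hW
    obtain ⟨u, hu, rfl⟩ := hW
    exact GenerateOpen.basic _ ⟨u, Or.inl hu, rfl⟩
  · apply le_generateFrom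
    rintro w ⟨w', hw' | hw', rfl⟩
    · exact ⟨w', hw', rfl⟩
    · simp only [Set.mem_singleton_iff] at hw'
      subst hw'
      rcases h with h | h
      · have : (Subtype.val : S → X) ⁻¹' w' = univ := by
          ext x; simpa using h x.2
        rw [this]; exact isOpen_univ
      · have : (Subtype.val : S → X) ⁻¹' w' = ∅ := by
          ext x; simpa using fun hx => (Set.disjoint_left.mp h) x.2 hx
        rw [this]; exact isOpen_empty

end Aux

/-- Lemma 2.4: adding countably many successively closed sets from a disjoint family to a
zero-dimensional Polish topology yields a zero-dimensional Polish topology that agrees with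
the original one on each `H n` and outside `⋃ n, H n`, and makes each `H n` clopen. -/
theorem add_disjoint_closed_sets (X : Type*) (σ : TopologicalSpace X)
    (hσpolish : @PolishSpace X σ)
    (hσzdim : @IsTopologicalBasis X σ {s | @IsClopen X σ s})
    (H : ℕ → Set X) (hdisj : Pairwise (Function.onFun Disjoint H))
    (σs : ℕ → TopologicalSpace X)
    (h0 : σs 0 = σ)
    (hsucc : ∀ n, σs (n + 1) = generateFrom ({s | @IsOpen X (σs n) s} ∪ {H n}))
    (hHclosed : ∀ n, @IsClosed X (σs n) (H n)) :
    letI σinf : TopologicalSpace X := ⨅ n, σs n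
    (@PolishSpace X σinf ∧ @IsTopologicalBasis X σinf {s | @IsClopen X σinf s}) ∧
    (TopologicalSpace.induced (Subtype.val : ((⋃ n, H n)ᶜ : Set X) → X) σinf =
      TopologicalSpace.induced (Subtype.val : ((⋃ n, H n)ᶜ : Set X) → X) σ) ∧
    (∀ n, TopologicalSpace.induced (Subtype.val : (H n) → X) σinf =
      TopologicalSpace.induced (Subtype.val : (H n) → X) σ) ∧
    (∀ n, @IsClopen X σinf (H n)) := by
  
  have hsucc_le : ∀ n, σs (n + 1) ≤ σs n := fun n => by
    rw [hsucc n]; exact genFrom_le (σs n) (H n)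
  have hanti : Antitone σs := antitone_nat_of_succ_le hsucc_le
  have hinfle : ∀ n, (⨅ n, σs n) ≤ σs n := fun n => iInf_le _ n
  -- each σs n is Polish and zero-dimensional
  have hpz : ∀ n, @PolishSpace X (σs n) ∧
      @IsTopologicalBasis X (σs n) {c | @IsClopen X (σs n) c} := by
    intro n
    induction n with
    | zero => rw [h0]; exact ⟨hσpolish, hσzdim⟩
    | succ n ih =>
        rw [hsucc n]
        exact ⟨@polish_genFrom X (σs n) ih.1 _ (hHclosed n),
          @zdim_genFrom X (σs n) ih.2 _ (hHclosed n)⟩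
  -- Polish
  have hpolishinf : @PolishSpace X (⨅ n, σs n) :=
    PolishSpace.iInf ⟨0, fun n => hanti (Nat.zero_le n)⟩ fun n => (hpz n).1
  -- zero-dimensional
  have hzdiminf : @IsTopologicalBasis X (⨅ n, σs n) {s | @IsClopen X (⨅ n, σs n) s} := by
    refine @isTopologicalBasis_of_isOpen_of_nhds X (⨅ n, σs n) _ (fun c hc => hc.2) ?_
    intro a W ha hW
    have hmem : W ∈ @nhds X (⨅ n, σs n) a := @IsOpen.mem_nhds X (⨅ n, σs n) a W hW ha
    have hdir : Directed (· ≥ ·) (fun n => @nhds X (σs n) a) := by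
      intro m n
      exact ⟨max m n, nhds_mono (hanti (le_max_left m n)),
        nhds_mono (hanti (le_max_right m n))⟩
    rw [show @nhds X (⨅ n, σs n) a = ⨅ n, @nhds X (σs n) a from nhds_iInf] at hmem
    obtain ⟨n, hn⟩ := (Filter.mem_iInf_of_directed hdir W).mp hmem
    obtain ⟨W', hW'W, hW'o, haW'⟩ := (@mem_nhds_iff X (σs n) a W).mp hn
    obtain ⟨c, hc, hac, hcW'⟩ :=
      @IsTopologicalBasis.exists_subset_of_mem_open X (σs n) _ (hpz n).2 a W' haW' hW'o
    exact ⟨c, ⟨@IsClosed.mk X (⨅ n, σs n) c (hinfle n _ (@IsClosed.isOpen_compl X (σs n) c hc.1)), hinfle n _ hc.2⟩, hac, hcW'.trans hW'W⟩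
  -- restrictions
  have hind : ∀ (S : Set X), (∀ n, S ⊆ H n ∨ Disjoint S (H n)) →
      TopologicalSpace.induced (Subtype.val : S → X) (⨅ n, σs n) =
        TopologicalSpace.induced (Subtype.val : S → X) σ := by
    intro S hS
    have h1 : ∀ n, TopologicalSpace.induced (Subtype.val : S → X) (σs n) =
        TopologicalSpace.induced (Subtype.val : S → X) σ := by
      intro n
      induction n with
      | zero => rw [h0]
      | succ n ih => rw [hsucc n, induced_genFrom (σs n) (H n) S (hS n), ih]
    show TopologicalSpace.induced _ (⨅ n, σs n) = _
    rw [induced_iInf]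
    simp only [h1]
    exact iInf_const
  refine ⟨⟨hpolishinf, hzdiminf⟩, ?_, ?_, ?_⟩
  · refine hind _ fun n => Or.inr ?_
    rw [Set.disjoint_left]
    intro x hx hxn
    exact hx (Set.mem_iUnion.mpr ⟨n, hxn⟩)
  · intro m
    refine hind _ fun n => ?_
    rcases eq_or_ne n m with rfl | hne
    · exact Or.inl subset_rfl
    · exact Or.inr (hdisj hne.symm)
  · intro n
    have hopen : IsOpen[σs (n + 1)] (H n) := by
      rw [hsucc n]; exact GenerateOpen.basic _ (Or.inr rfl)
    exact ⟨@IsClosed.mk X (⨅ n, σs n) (H n) (hinfle n _ (@IsClosed.isOpen_compl X (σs n) (H n) (hHclosed n))), hinfle (n + 1) _ hopen⟩
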